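/- For the Hamming ball B_k = {x ∈ F_2^k : ∑ x_i ≤ 1} of radius 1, the spectral norm satisfies √k/2 ≤ ‖1_{B_k}‖_A ≤ √(k+1). -/

import Mathlib

open Finset
open scoped Classical

noncomputable def chi {k : ℕ} (a x : Fin k → ZMod 2) : ℝ :=
  if ∑ i, a i * x i = (0 : ZMod 2) then 1 else -1

noncomputable def fhat {k : ℕ} (f : (Fin k → ZMod 2) → ℝ) (a : Fin k → ZMod 2) : ℝ :=
  (∑ x, f x * chi a x) / 2 ^ k

noncomputable def specNorm {k : ℕ} (f : (Fin k → ZMod 2) → ℝ) : ℝ :=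
  ∑ a, |fhat f a|

/-- The Hamming ball of radius 1 in `𝔽₂ᵏ`. -/
def hammingBall1 (k : ℕ) : Set (Fin k → ZMod 2) :=
  {x | (univ.filter fun i => x i ≠ 0).card ≤ 1}

noncomputable def ind {k : ℕ} (A : Set (Fin k → ZMod 2)) : (Fin k → ZMod 2) → ℝ :=
  fun x => if x ∈ A then 1 else 0

namespace Aux


variable {k : ℕ}

def ee (i : Fin k) : Fin k → ZMod 2 := fun j => if j = i then 1 else 0

lemma zmod2_cases' : ∀ u : ZMod 2, u = 0 ∨ u = 1 := by decide
lemma zmod2_cases (u : ZMod 2) : u = 0 ∨ u = 1 := zmod2_cases' u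

lemma two_eq_zero : (2 : ZMod 2) = 0 := by decide

lemma vadd_self (v : Fin k → ZMod 2) : v + v = 0 := by
  funext t
  have : ∀ u : ZMod 2, u + u = 0 := by decide
  exact this (v t)

lemma dot_ee (a : Fin k → ZMod 2) (i : Fin k) : ∑ t, a t * ee i t = a i := by
  simp [ee, mul_ite]

lemma ee_ne_zero (i : Fin k) : ee i ≠ (0 : Fin k → ZMod 2) := by
  intro h
  have := congrFun h i
  simp [ee] at this

lemma chi_zero (a : Fin k → ZMod 2) : chi a 0 = 1 := by
  simp [chi]

lemma chi_mul (a x y : Fin k → ZMod 2) : chi a x * chi a y = chi a (x + y) := by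
  unfold chi
  have hxy : ∑ i, a i * (x + y) i = (∑ i, a i * x i) + ∑ i, a i * y i := by
    rw [← Finset.sum_add_distrib]
    exact Finset.sum_congr rfl fun i _ => by simp [mul_add]
  rw [hxy]
  rcases zmod2_cases (∑ i, a i * x i) with h1 | h1 <;>
    rcases zmod2_cases (∑ i, a i * y i) with h2 | h2 <;>
      rw [h1, h2]
  · norm_num
  · norm_num
  · norm_num
  · rw [if_pos (show (1:ZMod 2) + 1 = 0 from by decide)]
    norm_num

lemma sum_chi (z : Fin k → ZMod 2) :
    ∑ a, chi a z = if z = 0 then (2 ^ k : ℝ) else 0 := by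
  by_cases hz : z = 0
  · subst hz
    simp only [chi_zero, Finset.sum_const, nsmul_eq_mul, mul_one, if_pos rfl]
    have : Fintype.card (Fin k → ZMod 2) = 2 ^ k := by
      simp [Fintype.card_fun]
    simp [this]
  · rw [if_neg hz]
    obtain ⟨i, hi⟩ : ∃ i, z i ≠ 0 := by
      by_contra h
      push_neg at h
      exact hz (funext fun t => h t)
    have hzi : z i = 1 := (zmod2_cases (z i)).resolve_left hi
    apply Finset.sum_ninvolution (fun a => a + ee i)
    · intro a
      have hdot : ∑ t, (a + ee i) t * z t = (∑ t, a t * z t) + 1 := by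
        have : ∀ t, (a + ee i) t * z t = a t * z t + ee i t * z t := by
          intro t; simp [add_mul]
        rw [Finset.sum_congr rfl fun t _ => this t, Finset.sum_add_distrib]
        congr 1
        calc ∑ t, ee i t * z t = z i := by simp [ee, ite_mul]
        _ = 1 := hzi
      unfold chi
      rw [hdot]
      rcases zmod2_cases (∑ t, a t * z t) with h1 | h1 <;> rw [h1]
      · rw [if_pos rfl, if_neg (show (0:ZMod 2) + 1 ≠ 0 from by decide)]
        norm_num
      · rw [if_pos (show (1:ZMod 2) + 1 = 0 from by decide), if_neg (show (1:ZMod 2) ≠ 0 from by decide)]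
        norm_num
    · intro a _
      intro h
      have := congrFun h i
      simp [ee] at this
    · intro a; exact Finset.mem_univ _
    · intro a
      rw [add_assoc, vadd_self, add_zero]

lemma ee_inj {i j : Fin k} (h : ee i = ee j) : i = j := by
  have := congrFun h i
  simp [ee] at this
  by_contra hne
  exact hne this

lemma ee_add_eq_zero {i j : Fin k} : ee i + ee j = 0 ↔ i = j := by
  constructor
  · intro h
    have := congrFun h i
    simp [ee] at this
    by_contra hne
    rw [if_neg hne] at this
    norm_num at this
  · rintro rfl; exact vadd_self _

lemma three_ne (i j l : Fin k) : ee i + ee j + ee l ≠ 0 := by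
  intro h
  by_cases hj : i = j
  · rw [← hj, vadd_self, zero_add] at h
    exact ee_ne_zero l h
  · by_cases hl : i = l
    · rw [← hl] at h
      have h' : ee j = 0 := by
        have heq : ee i + ee j + ee i = ee j + (ee i + ee i) := by ring
        rw [heq, vadd_self, add_zero] at h
        exact h
      exact ee_ne_zero j h'
    · have := congrFun h i
      simp [ee, hj, hl] at this

lemma four_eq (i j l m : Fin k) :
    ee i + ee j + ee l + ee m = 0 ↔ (i = j ∧ l = m) ∨ (i = l ∧ j = m) ∨ (i = m ∧ j = l) := by
  constructor
  · intro h
    by_cases hj : i = j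
    · rw [← hj] at h
      have h' : ee l + ee m = 0 := by
        have heq : ee i + ee i + ee l + ee m = (ee l + ee m) + (ee i + ee i) := by ring
        rw [heq, vadd_self, add_zero] at h
        exact h
      exact Or.inl ⟨hj, ee_add_eq_zero.mp h'⟩
    · by_cases hl : i = l
      · rw [← hl] at h
        have h' : ee j + ee m = 0 := by
          have heq : ee i + ee j + ee i + ee m = (ee j + ee m) + (ee i + ee i) := by ring
          rw [heq, vadd_self, add_zero] at h
          exact h
        exact Or.inr (Or.inl ⟨hl, ee_add_eq_zero.mp h'⟩)
      · by_cases hm : i = m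
        · rw [← hm] at h
          have h' : ee j + ee l = 0 := by
            have heq : ee i + ee j + ee l + ee i = (ee j + ee l) + (ee i + ee i) := by ring
            rw [heq, vadd_self, add_zero] at h
            exact h
          exact Or.inr (Or.inr ⟨hm, ee_add_eq_zero.mp h'⟩)
        · have := congrFun h i
          simp [ee, hj, hl, hm] at this
  · rintro (⟨rfl, rfl⟩ | ⟨rfl, rfl⟩ | ⟨rfl, rfl⟩)
    · have heq : ee i + ee i + ee l + ee l = (ee i + ee i) + (ee l + ee l) := by ring
      rw [heq, vadd_self, vadd_self, add_zero]
    · have heq : ee i + ee j + ee i + ee j = (ee i + ee i) + (ee j + ee j) := by ring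
      rw [heq, vadd_self, vadd_self, add_zero]
    · have heq : ee i + ee j + ee j + ee i = (ee i + ee i) + (ee j + ee j) := by ring
      rw [heq, vadd_self, vadd_self, add_zero]


lemma mem_ball_iff (x : Fin k → ZMod 2) :
    x ∈ hammingBall1 k ↔ x = 0 ∨ ∃ i, x = ee i := by
  constructor
  · intro hx
    have hcard : (univ.filter fun i => x i ≠ 0).card ≤ 1 := hx
    rcases Nat.le_one_iff_eq_zero_or_eq_one.mp hcard with h0 | h1
    · left
      rw [Finset.card_eq_zero] at h0
      funext t
      show x t = 0
      by_contra ht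
      have : t ∈ univ.filter fun i => x i ≠ 0 := by simp [ht]
      rw [h0] at this
      exact absurd this (Finset.notMem_empty t)
    · right
      obtain ⟨i, hi⟩ := Finset.card_eq_one.mp h1
      refine ⟨i, funext fun t => ?_⟩
      by_cases ht : t = i
      · subst ht
        have : t ∈ univ.filter fun i => x i ≠ 0 := by
          rw [hi]; exact Finset.mem_singleton_self t
        have hxt : x t ≠ 0 := by simpa using this
        have := (zmod2_cases (x t)).resolve_left hxt
        simp [ee, this]
      · have : t ∉ univ.filter fun i => x i ≠ 0 := by
          rw [hi]; simp [ht]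
        have hxt : x t = 0 := by simpa using this
        simp [ee, ht, hxt]
  · rintro (rfl | ⟨i, rfl⟩)
    · show (univ.filter fun i => (0 : Fin k → ZMod 2) i ≠ 0).card ≤ 1
      simp
    · show (univ.filter fun j => ee i j ≠ 0).card ≤ 1
      have : (univ.filter fun j => ee i j ≠ 0) = {i} := by
        ext t
        simp only [Finset.mem_filter, Finset.mem_univ, true_and, Finset.mem_singleton, ee]
        by_cases ht : t = i <;> simp [ht]
      rw [this, Finset.card_singleton]

noncomputable def S (a : Fin k → ZMod 2) : ℝ := ∑ i, chi a (ee i)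

lemma sum_ind_chi (a : Fin k → ZMod 2) :
    ∑ x, ind (hammingBall1 k) x * chi a x = 1 + S a := by
  have hset : (univ.filter fun x => x ∈ hammingBall1 k) =
      insert (0 : Fin k → ZMod 2) (univ.image ee) := by
    ext x
    simp only [Finset.mem_filter, Finset.mem_univ, true_and, Finset.mem_insert,
      Finset.mem_image]
    rw [mem_ball_iff]
    constructor
    · rintro (h | ⟨i, rfl⟩)
      · exact Or.inl h
      · exact Or.inr ⟨i, rfl⟩
    · rintro (h | ⟨i, -, rfl⟩)
      · exact Or.inl h
      · exact Or.inr ⟨i, rfl⟩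
  have : ∑ x, ind (hammingBall1 k) x * chi a x
      = ∑ x ∈ univ.filter (fun x => x ∈ hammingBall1 k), chi a x := by
    rw [Finset.sum_filter]
    refine Finset.sum_congr rfl fun x _ => ?_
    unfold ind
    by_cases hx : x ∈ hammingBall1 k <;> simp [hx]
  rw [this, hset, Finset.sum_insert, chi_zero, Finset.sum_image]
  · rfl
  · intro i _ j _ h
    exact ee_inj h
  · intro h
    obtain ⟨i, -, hi⟩ := Finset.mem_image.mp h
    exact ee_ne_zero i hi

lemma M1 : ∑ a, S (k := k) a = 0 := by
  unfold S
  rw [Finset.sum_comm]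
  refine Finset.sum_eq_zero fun i _ => ?_
  rw [sum_chi, if_neg (ee_ne_zero i)]

lemma sq_expand (a : Fin k → ZMod 2) : (S a) ^ 2 = ∑ i, ∑ j, chi a (ee i + ee j) := by
  rw [sq]
  unfold S
  rw [Finset.sum_mul_sum]
  exact Finset.sum_congr rfl fun i _ => Finset.sum_congr rfl fun j _ => chi_mul a _ _

lemma M2 : ∑ a, (S (k := k) a) ^ 2 = k * 2 ^ k := by
  simp only [sq_expand]
  rw [Finset.sum_comm]
  have hswap : ∀ i : Fin k, ∑ a : Fin k → ZMod 2, ∑ j, chi a (ee i + ee j)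
      = ∑ j, ∑ a : Fin k → ZMod 2, chi a (ee i + ee j) := fun i => Finset.sum_comm
  simp only [hswap]
  have hval : ∀ i : Fin k, ∑ j, ∑ a : Fin k → ZMod 2, chi a (ee i + ee j) = 2 ^ k := by
    intro i
    have : ∀ j : Fin k, ∑ a : Fin k → ZMod 2, chi a (ee i + ee j)
        = if i = j then (2:ℝ) ^ k else 0 := by
      intro j
      rw [sum_chi]
      exact if_congr ee_add_eq_zero rfl rfl
    simp only [this]
    rw [Finset.sum_ite_eq]
    simp
  simp only [hval]
  rw [Finset.sum_const]
  simp [mul_comm]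

lemma M3 : ∑ a, (S (k := k) a) ^ 3 = 0 := by
  have h1 : ∀ a : Fin k → ZMod 2, (S a) ^ 3 = ∑ i, ∑ j, ∑ l, chi a (ee i + ee j + ee l) := by
    intro a
    have h3 : (S a) ^ 3 = (∑ i, ∑ j, chi a (ee i + ee j)) * ∑ l, chi a (ee l) := by
      rw [← sq_expand]
      unfold S
      ring
    rw [h3, Finset.sum_mul]
    refine Finset.sum_congr rfl fun i _ => ?_
    rw [Finset.sum_mul]
    refine Finset.sum_congr rfl fun j _ => ?_
    rw [Finset.mul_sum]
    exact Finset.sum_congr rfl fun l _ => chi_mul a _ _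
  simp only [h1]
  rw [Finset.sum_comm]
  refine Finset.sum_eq_zero fun i _ => ?_
  rw [Finset.sum_comm]
  refine Finset.sum_eq_zero fun j _ => ?_
  rw [Finset.sum_comm]
  refine Finset.sum_eq_zero fun l _ => ?_
  rw [sum_chi, if_neg (three_ne i j l)]

lemma ite_ite (c : ℝ) (i j l m : Fin k) :
    (if (i = j ∧ l = m) ∨ (i = l ∧ j = m) ∨ (i = m ∧ j = l) then c else 0) =
      c * ((if i=j then (1:ℝ) else 0) * (if l=m then (1:ℝ) else 0))
       + c * ((if i=l then (1:ℝ) else 0) * (if j=m then (1:ℝ) else 0))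
       + c * ((if i=m then (1:ℝ) else 0) * (if j=l then (1:ℝ) else 0))
       - 2 * (c * ((if i=j then (1:ℝ) else 0) * ((if i=l then (1:ℝ) else 0) * (if i=m then (1:ℝ) else 0)))) := by
  by_cases h1 : i = j <;> by_cases h2 : l = m <;> by_cases h3 : i = l <;>
    by_cases h4 : j = m <;> by_cases h5 : i = m <;> by_cases h6 : j = l <;>
      simp_all <;> ring

lemma M4 : ∑ a, (S (k := k) a) ^ 4 = (3 * (k:ℝ) ^ 2 - 2 * k) * 2 ^ k := by
  have h1 : ∀ a : Fin k → ZMod 2,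
      (S a) ^ 4 = ∑ i, ∑ j, ∑ l, ∑ m, chi a (ee i + ee j + ee l + ee m) := by
    intro a
    have h4 : (S a) ^ 4 = (∑ i, ∑ j, chi a (ee i + ee j)) * ∑ l, ∑ m, chi a (ee l + ee m) := by
      rw [← sq_expand]; ring
    rw [h4, Finset.sum_mul]
    refine Finset.sum_congr rfl fun i _ => ?_
    rw [Finset.sum_mul]
    refine Finset.sum_congr rfl fun j _ => ?_
    rw [Finset.mul_sum]
    refine Finset.sum_congr rfl fun l _ => ?_
    rw [Finset.mul_sum]
    refine Finset.sum_congr rfl fun m _ => ?_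
    rw [chi_mul]
    congr 1
    abel
  simp only [h1]
  rw [Finset.sum_comm]
  have hsw : ∀ {α : Type} [inst : Fintype α] (F : (Fin k → ZMod 2) → α → ℝ),
      (∑ a, ∑ i, F a i) = ∑ i, ∑ a, F a i := fun F => Finset.sum_comm
  have key : ∀ i j l m : Fin k, ∑ a : Fin k → ZMod 2, chi a (ee i + ee j + ee l + ee m)
      = if (i = j ∧ l = m) ∨ (i = l ∧ j = m) ∨ (i = m ∧ j = l) then (2:ℝ)^k else 0 := by
    intro i j l m
    rw [sum_chi]
    exact if_congr (four_eq i j l m) rfl rfl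
  have step : ∀ i : Fin k, (∑ a : Fin k → ZMod 2, ∑ j, ∑ l, ∑ m,
        chi a (ee i + ee j + ee l + ee m))
      = ∑ j, ∑ l, ∑ m, (if (i = j ∧ l = m) ∨ (i = l ∧ j = m) ∨ (i = m ∧ j = l)
          then (2:ℝ)^k else 0) := by
    intro i
    rw [hsw]
    refine Finset.sum_congr rfl fun j _ => ?_
    rw [hsw]
    refine Finset.sum_congr rfl fun l _ => ?_
    rw [hsw]
    exact Finset.sum_congr rfl fun m _ => key i j l m
  have inner3 : ∀ i : Fin k, ∑ j, ∑ l, ∑ m, (if (i = j ∧ l = m) ∨ (i = l ∧ j = m) ∨ (i = m ∧ j = l)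
          then (2:ℝ)^k else 0) = 3*k*(2:ℝ)^k - 2*(2:ℝ)^k := by
    intro i
    simp only [ite_ite]
    simp only [Finset.sum_add_distrib, Finset.sum_sub_distrib, mul_ite, ite_mul,
      mul_one, mul_zero, one_mul, zero_mul, Finset.sum_ite_eq, Finset.sum_ite_eq',
      Finset.mem_univ, if_true, Finset.sum_const, Finset.card_univ, Fintype.card_fin,
      nsmul_eq_mul, Finset.sum_ite_irrel, Finset.sum_const_zero]
    ring
  simp only [step, inner3]
  rw [Finset.sum_const, Finset.card_univ]
  simp only [Fintype.card_fin, nsmul_eq_mul]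
  ring

lemma card_space : (Fintype.card (Fin k → ZMod 2) : ℝ) = 2 ^ k := by
  simp [Fintype.card_fun]

noncomputable def u {k : ℕ} (a : Fin k → ZMod 2) : ℝ := |1 + S a|

lemma u_nonneg (a : Fin k → ZMod 2) : 0 ≤ u a := abs_nonneg _

lemma sum_u_sq : ∑ a, (u (k := k) a) ^ 2 = ((k:ℝ) + 1) * 2 ^ k := by
  have : ∀ a : Fin k → ZMod 2, (u a) ^ 2 = 1 + 2 * S a + (S a) ^ 2 := by
    intro a; rw [u, sq_abs]; ring
  simp only [this]
  rw [Finset.sum_add_distrib, Finset.sum_add_distrib, ← Finset.mul_sum, M1, M2,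
    Finset.sum_const, Finset.card_univ]
  rw [nsmul_eq_mul, mul_one, card_space]
  ring

lemma sum_u_four : ∑ a, (u (k := k) a) ^ 4 = (3 * (k:ℝ) + 1) * ((k:ℝ) + 1) * 2 ^ k := by
  have habs : ∀ a : Fin k → ZMod 2, (u a) ^ 4 = (1 + S a) ^ 4 := by
    intro a
    rw [u, show (4 : ℕ) = 2 * 2 from rfl, pow_mul, pow_mul, sq_abs]
  have : ∀ a : Fin k → ZMod 2,
      (u a) ^ 4 = 1 + 4 * S a + 6 * (S a) ^ 2 + 4 * (S a) ^ 3 + (S a) ^ 4 := by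
    intro a; rw [habs]; ring
  simp only [this]
  rw [Finset.sum_add_distrib, Finset.sum_add_distrib, Finset.sum_add_distrib,
    Finset.sum_add_distrib, ← Finset.mul_sum, ← Finset.mul_sum, ← Finset.mul_sum,
    M1, M2, M3, M4, Finset.sum_const, Finset.card_univ]
  rw [nsmul_eq_mul, mul_one, card_space]
  ring

lemma fhat_eq (a : Fin k → ZMod 2) :
    fhat (ind (hammingBall1 k)) a = (1 + S a) / 2 ^ k := by
  rw [fhat, sum_ind_chi]

lemma specNorm_eq : specNorm (ind (hammingBall1 k)) = (∑ a, u (k := k) a) / 2 ^ k := by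
  rw [specNorm, Finset.sum_div]
  refine Finset.sum_congr rfl fun a _ => ?_
  rw [fhat_eq, abs_div, u, abs_of_pos (show (0:ℝ) < 2 ^ k by positivity)]

theorem stmt7' (k : ℕ) :
    Real.sqrt k / 2 ≤ specNorm (ind (hammingBall1 k)) ∧
      specNorm (ind (hammingBall1 k)) ≤ Real.sqrt (k + 1) := by
  have hN : (0:ℝ) < 2 ^ k := by positivity
  set N : ℝ := 2 ^ k with hNdef
  set s1 : ℝ := ∑ a, u (k := k) a with hs1def
  have hs1 : 0 ≤ s1 := Finset.sum_nonneg fun a _ => u_nonneg a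
  have hs2 : ∑ a, (u (k := k) a) ^ 2 = ((k:ℝ) + 1) * N := sum_u_sq
  have hs4 : ∑ a, (u (k := k) a) ^ 4 = (3 * (k:ℝ) + 1) * ((k:ℝ) + 1) * N := sum_u_four
  set s3 : ℝ := ∑ a, (u (k := k) a) ^ 3 with hs3def
  have hs3 : 0 ≤ s3 := Finset.sum_nonneg fun a _ => pow_nonneg (u_nonneg a) 3
  have hspec : specNorm (ind (hammingBall1 k)) = s1 / N := specNorm_eq
  -- Cauchy-Schwarz 1 : (∑ u²)² ≤ s1 * s3
  have CS1 : (((k:ℝ) + 1) * N) ^ 2 ≤ s1 * s3 := by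
    have := Finset.sum_mul_sq_le_sq_mul_sq Finset.univ
      (fun a : Fin k → ZMod 2 => Real.sqrt (u a))
      (fun a : Fin k → ZMod 2 => u a * Real.sqrt (u a))
    have e1 : ∀ a : Fin k → ZMod 2,
        Real.sqrt (u a) * (u a * Real.sqrt (u a)) = (u a) ^ 2 := by
      intro a
      have : Real.sqrt (u a) * Real.sqrt (u a) = u a := Real.mul_self_sqrt (u_nonneg a)
      calc Real.sqrt (u a) * (u a * Real.sqrt (u a))
          = (Real.sqrt (u a) * Real.sqrt (u a)) * u a := by ring
        _ = u a * u a := by rw [this]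
        _ = (u a) ^ 2 := (sq (u a)).symm
    have e2 : ∀ a : Fin k → ZMod 2, (Real.sqrt (u a)) ^ 2 = u a := fun a =>
      Real.sq_sqrt (u_nonneg a)
    have e3 : ∀ a : Fin k → ZMod 2, (u a * Real.sqrt (u a)) ^ 2 = (u a) ^ 3 := by
      intro a
      rw [mul_pow, Real.sq_sqrt (u_nonneg a)]
      ring
    simp only [e1, e2, e3] at this
    rwa [hs2] at this
  -- Cauchy-Schwarz 2 : s3² ≤ (∑ u²) * (∑ u⁴)
  have CS2 : s3 ^ 2 ≤ (((k:ℝ) + 1) * N) * ((3 * (k:ℝ) + 1) * ((k:ℝ) + 1) * N) := by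
    have := Finset.sum_mul_sq_le_sq_mul_sq Finset.univ
      (fun a : Fin k → ZMod 2 => u a)
      (fun a : Fin k → ZMod 2 => (u a) ^ 2)
    have e1 : ∀ a : Fin k → ZMod 2, u a * (u a) ^ 2 = (u a) ^ 3 := fun a => by ring
    have e2 : ∀ a : Fin k → ZMod 2, ((u a) ^ 2) ^ 2 = (u a) ^ 4 := fun a => by ring
    simp only [e1, e2] at this
    rwa [hs2, hs4] at this
  -- Upper bound
  have UB : s1 ^ 2 ≤ ((k:ℝ) + 1) * N ^ 2 := by
    have := Finset.sum_mul_sq_le_sq_mul_sq Finset.univ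
      (fun a : Fin k → ZMod 2 => u a) (fun _ : Fin k → ZMod 2 => (1:ℝ))
    simp only [mul_one, one_pow, Finset.sum_const, Finset.card_univ, nsmul_eq_mul] at this
    rw [hs2] at this
    calc s1 ^ 2 ≤ ((k:ℝ) + 1) * N * (Fintype.card (Fin k → ZMod 2)) := this
      _ = ((k:ℝ) + 1) * N ^ 2 := by rw [card_space]; ring
  have hub : specNorm (ind (hammingBall1 k)) ≤ Real.sqrt (k + 1) := by
    rw [hspec]
    have h1 : (s1 / N) ^ 2 ≤ (k:ℝ) + 1 := by
      rw [div_pow]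
      rw [div_le_iff₀ (by positivity)]
      exact UB
    calc s1 / N = Real.sqrt ((s1 / N) ^ 2) := by
          rw [Real.sqrt_sq (by positivity)]
      _ ≤ Real.sqrt ((k:ℝ) + 1) := Real.sqrt_le_sqrt h1
  -- Lower bound
  have hkey : (k:ℝ) * N ^ 2 ≤ 4 * s1 ^ 2 := by
    have hpos2 : (0:ℝ) < ((k:ℝ) + 1) * N := by positivity
    have hD : (((k:ℝ) + 1) * N) ^ 4 ≤ s1 ^ 2 * (s3 ^ 2) := by
      calc (((k:ℝ) + 1) * N) ^ 4 = ((((k:ℝ) + 1) * N) ^ 2) ^ 2 := by ring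
        _ ≤ (s1 * s3) ^ 2 := by
            apply pow_le_pow_left₀ (by positivity) CS1
        _ = s1 ^ 2 * s3 ^ 2 := by ring
    have hE : (((k:ℝ) + 1) * N) ^ 4
        ≤ s1 ^ 2 * ((((k:ℝ) + 1) * N) * ((3 * (k:ℝ) + 1) * ((k:ℝ) + 1) * N)) := by
      calc (((k:ℝ) + 1) * N) ^ 4 ≤ s1 ^ 2 * (s3 ^ 2) := hD
        _ ≤ s1 ^ 2 * ((((k:ℝ) + 1) * N) * ((3 * (k:ℝ) + 1) * ((k:ℝ) + 1) * N)) := by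
            exact mul_le_mul_of_nonneg_left CS2 (sq_nonneg s1)
    nlinarith [sq_nonneg s1, hN, (Nat.cast_nonneg k : (0:ℝ) ≤ (k:ℝ)), mul_pos hN hN,
      sq_nonneg ((k:ℝ) + 1), mul_pos hpos2 hpos2]
  have hlb : Real.sqrt k / 2 ≤ specNorm (ind (hammingBall1 k)) := by
    rw [hspec]
    rw [div_le_iff₀ (by norm_num : (0:ℝ) < 2)]
    have h2 : (k:ℝ) ≤ (s1 / N * 2) ^ 2 := by
      rw [mul_pow, div_pow]
      rw [← sub_nonneg]
      have hNN : (0:ℝ) < N ^ 2 := by positivity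
      have : (s1 ^ 2 / N ^ 2 * 2 ^ 2 - (k:ℝ)) * N ^ 2 = 4 * s1 ^ 2 - (k:ℝ) * N ^ 2 := by
        field_simp
        ring
      nlinarith [hkey]
    calc Real.sqrt k ≤ Real.sqrt ((s1 / N * 2) ^ 2) := Real.sqrt_le_sqrt h2
      _ = s1 / N * 2 := Real.sqrt_sq (by positivity)
  exact ⟨hlb, hub⟩
end Aux

theorem stmt7 (k : ℕ) :
    Real.sqrt k / 2 ≤ specNorm (ind (hammingBall1 k)) ∧
      specNorm (ind (hammingBall1 k)) ≤ Real.sqrt (k + 1) := Aux.stmt7' k
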